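/- Let B be a finite set of points in ℝ^m all contained in a set S of diameter W (i.e., ‖s₁ − s₂‖ ≤ W for all s₁, s₂ ∈ S), and let 1 ≤ k ≤ |B|. Define the novelty score ρ(x; B) = (1/k) · Σ_{b ∈ N_k(x;B)} ‖x − b‖, where N_k(x; B) is a set of k nearest neighbors of x in B. If B' is obtained from B by replacing one element (with both B, B' ⊆ S and x ∈ S), then |ρ(x; B) − ρ(x; B')| ≤ W/k, provided the k-nearest-neighbor sets N_k(x;B) and N_k(x;B') differ in at most one element. -/
import Mathlib


open Finset

/-- Uniform stability of the novelty score: if the k-nearest-neighbor sets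
differ in at most one element and everything lies in a set of diameter `W`,
then the novelty scores differ by at most `W / k`. -/
theorem novelty_score_uniform_stability
    (m k : ℕ) (hk : 1 ≤ k) [DecidableEq (EuclideanSpace ℝ (Fin m))]
    (S : Set (EuclideanSpace ℝ (Fin m))) (W : ℝ)
    (hW : ∀ s₁ ∈ S, ∀ s₂ ∈ S, ‖s₁ - s₂‖ ≤ W)
    (x : EuclideanSpace ℝ (Fin m)) (hx : x ∈ S)
    (N N' : Finset (EuclideanSpace ℝ (Fin m)))
    (hN : N.card = k) (hN' : N'.card = k)
    (hNS : ∀ b ∈ N, b ∈ S) (hN'S : ∀ b ∈ N', b ∈ S)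
    (hdiff : (N \ N').card ≤ 1) :
    |(1 / (k : ℝ)) * ∑ b ∈ N, ‖x - b‖ -
      (1 / (k : ℝ)) * ∑ b ∈ N', ‖x - b‖| ≤ W / k := by
  have hW0 : 0 ≤ W := by
    have := hW x hx x hx
    simpa using this
  have hk0 : (0:ℝ) < k := by exact_mod_cast hk
  have key : |(∑ b ∈ N, ‖x - b‖) - ∑ b ∈ N', ‖x - b‖| ≤ W := by
    have hsum : (∑ b ∈ N \ N', ‖x - b‖) - (∑ b ∈ N' \ N, ‖x - b‖)
        = (∑ b ∈ N, ‖x - b‖) - ∑ b ∈ N', ‖x - b‖ :=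
      Finset.sum_sdiff_sub_sum_sdiff
    rw [← hsum]
    have ha := Finset.card_sdiff_add_card_inter N N'
    have hb := Finset.card_sdiff_add_card_inter N' N
    rw [Finset.inter_comm] at hb
    have hcard' : (N' \ N).card = (N \ N').card := by omega
    interval_cases h : (N \ N').card
    · have hNN : N = N' := by
        apply Finset.eq_of_subset_of_card_le
        · intro a haN
          by_contra hnot
          have : a ∈ N \ N' := Finset.mem_sdiff.mpr ⟨haN, hnot⟩
          simpa [Finset.card_eq_zero.mp h] using this
        · omega
      simp [hNN, hW0]
    · obtain ⟨a, haeq⟩ := Finset.card_eq_one.mp h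
      obtain ⟨b, hbeq⟩ := Finset.card_eq_one.mp hcard'
      have haS : a ∈ S := hNS a (Finset.mem_sdiff.mp (haeq ▸ Finset.mem_singleton_self a)).1
      have hbS : b ∈ S := hN'S b (Finset.mem_sdiff.mp (hbeq ▸ Finset.mem_singleton_self b)).1
      rw [haeq, hbeq, Finset.sum_singleton, Finset.sum_singleton]
      have h1 : ‖x - a‖ ≤ W := hW x hx a haS
      have h2 : ‖x - b‖ ≤ W := hW x hx b hbS
      have h3 : 0 ≤ ‖x - a‖ := norm_nonneg _
      have h4 : 0 ≤ ‖x - b‖ := norm_nonneg _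
      rw [abs_le]
      constructor <;> linarith
  calc |(1 / (k : ℝ)) * ∑ b ∈ N, ‖x - b‖ - (1 / (k : ℝ)) * ∑ b ∈ N', ‖x - b‖|
      = (1 / (k : ℝ)) * |(∑ b ∈ N, ‖x - b‖) - ∑ b ∈ N', ‖x - b‖| := by
        rw [← mul_sub, abs_mul, abs_of_pos (by positivity)]
    _ ≤ (1 / (k : ℝ)) * W := by
        apply mul_le_mul_of_nonneg_left key (by positivity)
    _ = W / k := by ring
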